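/- For the two-level (spin-boson) coefficient with zero-temperature bath and linear spectral density, γ^{(1)}(ω,ω′,t) = α e^{i(ω′−ω)t/2} ∫₀^{ω_c} Ω [t sinc((ω′−Ω)t/2)][t sinc((ω−Ω)t/2)] dΩ with sharp cutoff ω_c > ω₀ > 0 satisfies: for ω = ω′ = ω₀ fixed, γ^{(1)}(ω₀,ω₀,t)/t → 2πα ω₀ as t → ∞. -/

import Mathlib

open MeasureTheory Filter Complex

noncomputable def sinc (x : ℝ) : ℝ := if x = 0 then 1 else Real.sin x / x

lemma sinc_zero : sinc 0 = 1 := if_pos rfl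

lemma sinc_of_ne {x : ℝ} (hx : x ≠ 0) : sinc x = Real.sin x / x := if_neg hx

lemma sinc_neg (x : ℝ) : sinc (-x) = sinc x := by
  rcases eq_or_ne x 0 with rfl | hx
  · simp
  · rw [sinc_of_ne (neg_ne_zero.mpr hx), sinc_of_ne hx, Real.sin_neg, neg_div_neg_eq]

lemma sinc_sq_le (x : ℝ) : sinc x ^ 2 ≤ 2 / (1 + x ^ 2) := by
  rcases eq_or_ne x 0 with rfl | hx
  · norm_num [sinc_zero]
  · rw [sinc_of_ne hx, div_pow]
    rw [div_le_div_iff₀ (by positivity) (by positivity)]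
    have h1 : Real.sin x ^ 2 ≤ 1 := Real.sin_sq_le_one x
    have h2 : Real.sin x ^ 2 ≤ x ^ 2 := Real.sin_sq_le_sq
    nlinarith [sq_nonneg x]

lemma measurable_sinc : Measurable sinc := by
  unfold sinc
  exact Measurable.ite (measurableSet_singleton 0) measurable_const
    (Real.measurable_sin.div measurable_id)

lemma integrable_sinc_sq : Integrable (fun x : ℝ => sinc x ^ 2) := by
  have hm : AEStronglyMeasurable (fun x : ℝ => sinc x ^ 2) volume :=
    ((measurable_sinc.pow_const 2).aestronglyMeasurable)
  refine Integrable.mono (g := fun x : ℝ => 2 * (1 + x ^ 2)⁻¹)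
    (integrable_inv_one_add_sq.const_mul 2) hm ?_
  refine Filter.Eventually.of_forall fun x => ?_
  simp only [Real.norm_eq_abs]
  rw [_root_.abs_of_nonneg (by positivity : (0:ℝ) ≤ 2 * (1 + x^2)⁻¹),
    _root_.abs_of_nonneg (sq_nonneg _)]
  simpa [div_eq_mul_inv] using sinc_sq_le x

noncomputable def Tri : ℝ → ℂ := fun x => ((max 0 (1 - |x|) : ℝ) : ℂ)

lemma continuous_Tri : Continuous Tri :=
  Complex.continuous_ofReal.comp (continuous_const.max (continuous_const.sub continuous_abs))

lemma Tri_eq_zero {x : ℝ} (hx : 1 ≤ |x|) : Tri x = 0 := by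
  simp [Tri, max_eq_left (sub_nonpos.mpr hx)]

lemma integrable_Tri : Integrable Tri := by
  refine continuous_Tri.integrable_of_hasCompactSupport
    (HasCompactSupport.intro (isCompact_Icc (a := (-1:ℝ)) (b := 1)) fun x hx => ?_)
  refine Tri_eq_zero ?_
  simp only [Set.mem_Icc, not_and_or, not_le] at hx
  rcases hx with h | h
  · rw [abs_of_neg (by linarith)]; linarith
  · rw [abs_of_pos (by linarith)]; linarith

lemma hasDerivAt_expk (k : ℂ) (x : ℝ) :
    HasDerivAt (fun x : ℝ => Complex.exp (k * x)) (k * Complex.exp (k * x)) x := by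
  have h : HasDerivAt (fun z : ℂ => Complex.exp (k * z)) (k * Complex.exp (k * x)) (x : ℂ) := by
    simpa [mul_comm] using ((hasDerivAt_id ((x:ℝ):ℂ)).const_mul k).cexp
  exact h.comp_ofReal

lemma integral_piece_right {k : ℂ} (hk : k ≠ 0) :
    (∫ v in (0:ℝ)..1, Complex.exp (k * v) * (1 - (v:ℂ)))
      = Complex.exp k / k^2 - 1/k - 1/k^2 := by
  have hG : ∀ x ∈ Set.uIcc (0:ℝ) 1, HasDerivAt
      (fun x : ℝ => ((1 - (x:ℂ))/k + 1/k^2) * Complex.exp (k * x))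
      (Complex.exp (k * x) * (1 - (x:ℂ))) x := by
    intro x _
    have h1 : HasDerivAt (fun x : ℝ => ((1 - (x:ℂ))/k + 1/k^2)) (-(1/k)) x := by
      have h := ((((hasDerivAt_id ((x:ℝ):ℂ)).const_sub 1).div_const k).add_const
        (1/k^2)).comp_ofReal
      convert h using 1
      · rfl
      · ring
    have h2 := h1.mul (hasDerivAt_expk k x)
    refine h2.congr_deriv ?_
    field_simp
    ring
  rw [intervalIntegral.integral_eq_sub_of_hasDerivAt hG
    (Continuous.intervalIntegrable (by continuity) _ _)]
  push_cast
  field_simp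
  simp only [Complex.exp_zero, mul_zero, Complex.ofReal_zero]
  ring

lemma integral_piece_left {k : ℂ} (hk : k ≠ 0) :
    (∫ v in (-1:ℝ)..0, Complex.exp (k * v) * (1 + (v:ℂ)))
      = 1/k - 1/k^2 + Complex.exp (-k) / k^2 := by
  have hG : ∀ x ∈ Set.uIcc (-1:ℝ) 0, HasDerivAt
      (fun x : ℝ => ((1 + (x:ℂ))/k - 1/k^2) * Complex.exp (k * x))
      (Complex.exp (k * x) * (1 + (x:ℂ))) x := by
    intro x _
    have h1 : HasDerivAt (fun x : ℝ => ((1 + (x:ℂ))/k - 1/k^2)) (1/k) x := by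
      have h := ((((hasDerivAt_id ((x:ℝ):ℂ)).const_add 1).div_const k).sub_const
        (1/k^2)).comp_ofReal
      exact h
    have h2 := h1.mul (hasDerivAt_expk k x)
    refine h2.congr_deriv ?_
    field_simp
    ring
  rw [intervalIntegral.integral_eq_sub_of_hasDerivAt hG
    (Continuous.intervalIntegrable (by continuity) _ _)]
  push_cast
  field_simp
  ring_nf
  rw [Complex.exp_zero]
  ring

lemma fourier_Tri (ξ : ℝ) :
    FourierTransform.fourier Tri ξ = (((sinc (Real.pi * ξ)) ^ 2 : ℝ) : ℂ) := by
  rw [Real.fourier_real_eq_integral_exp_smul]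
  set c : ℝ := 2 * Real.pi * ξ with hc
  set k : ℂ := -(c : ℂ) * Complex.I with hk
  have hker : ∀ v : ℝ, Complex.exp (↑(-2 * Real.pi * v * ξ) * Complex.I) • Tri v
      = Complex.exp (k * v) * Tri v := by
    intro v
    rw [smul_eq_mul]
    congr 2
    rw [hk, hc]
    push_cast
    ring
  have hsupp : Function.support
      (fun v : ℝ => Complex.exp (↑(-2 * Real.pi * v * ξ) * Complex.I) • Tri v) ⊆
      Set.Ioc (-1 : ℝ) 1 := by
    intro v hv
    by_contra h
    apply hv
    have h1 : (1:ℝ) ≤ |v| := by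
      simp only [Set.mem_Ioc, not_and_or, not_lt, not_le] at h
      rcases h with h | h
      · rw [abs_of_nonpos (by linarith)]; linarith
      · rw [abs_of_pos (by linarith)]; linarith
    simp [Tri_eq_zero h1]
  rw [← intervalIntegral.integral_eq_integral_of_support_subset hsupp]
  have hint : (∫ v in (-1:ℝ)..1, Complex.exp (↑(-2 * Real.pi * v * ξ) * Complex.I) • Tri v)
      = (∫ v in (-1:ℝ)..0, Complex.exp (k * v) * (1 + (v:ℂ)))
        + ∫ v in (0:ℝ)..1, Complex.exp (k * v) * (1 - (v:ℂ)) := by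
    have hcont : Continuous fun v : ℝ =>
        Complex.exp (↑(-2 * Real.pi * v * ξ) * Complex.I) • Tri v := by
      refine (Continuous.smul ?_ continuous_Tri : Continuous ((fun v : ℝ => Complex.exp (↑(-2 * Real.pi * v * ξ) * Complex.I)) • Tri))
      exact Complex.continuous_exp.comp (by continuity)
    rw [← intervalIntegral.integral_add_adjacent_intervals
      (a := (-1:ℝ)) (b := 0) (c := 1)
      (hcont.intervalIntegrable _ _) (hcont.intervalIntegrable _ _)]
    congr 1
    · refine intervalIntegral.integral_congr fun v hv => ?_
      rw [Set.uIcc_of_le (by norm_num)] at hv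
      obtain ⟨hv1, hv2⟩ := hv
      rw [hker]
      congr 1
      have hmax : (0:ℝ) ⊔ (1 - |v|) = 1 + v := by
        rw [abs_of_nonpos hv2, max_eq_right (by linarith : (0:ℝ) ≤ 1 - -v)]
        ring
      simp only [Tri, hmax]
      push_cast
      ring
    · refine intervalIntegral.integral_congr fun v hv => ?_
      rw [Set.uIcc_of_le (by norm_num)] at hv
      obtain ⟨hv1, hv2⟩ := hv
      rw [hker]
      congr 1
      have hmax : (0:ℝ) ⊔ (1 - |v|) = 1 - v := by
        rw [_root_.abs_of_nonneg hv1, max_eq_right (by linarith : (0:ℝ) ≤ 1 - v)]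
      simp only [Tri, hmax]
      push_cast
      ring
  rw [hint]
  rcases eq_or_ne ξ 0 with rfl | hξ
  · have hk0 : k = 0 := by simp [hk, hc]
    simp only [hk0, zero_mul, Complex.exp_zero, one_mul]
    have i1 : (∫ x in (-1:ℝ)..0, (1 + (x:ℂ))) = ((1/2 : ℝ) : ℂ) := by
      rw [intervalIntegral.integral_add intervalIntegrable_const
        (Complex.continuous_ofReal.intervalIntegrable _ _)]
      rw [intervalIntegral.integral_ofReal (f := fun x : ℝ => x)]
      simp [integral_id]
      norm_num
    have i2 : (∫ x in (0:ℝ)..1, (1 - (x:ℂ))) = ((1/2 : ℝ) : ℂ) := by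
      rw [intervalIntegral.integral_sub intervalIntegrable_const
        (Complex.continuous_ofReal.intervalIntegrable _ _)]
      rw [intervalIntegral.integral_ofReal (f := fun x : ℝ => x)]
      simp [integral_id]
      norm_num
    rw [i1, i2]
    norm_num [sinc_zero]
  · have hcne : c ≠ 0 := by
      rw [hc]
      exact mul_ne_zero (by positivity) hξ
    have hkne : k ≠ 0 := by
      rw [hk]
      simp [Complex.ofReal_eq_zero, hcne, Complex.I_ne_zero]
    rw [integral_piece_left hkne, integral_piece_right hkne]
    have hsum : Complex.exp k + Complex.exp (-k) = ((2 * Real.cos c : ℝ) : ℂ) := by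
      have e1 : k = ((-c : ℝ) : ℂ) * Complex.I := by rw [hk]; push_cast; ring
      have e2 : -k = ((c : ℝ) : ℂ) * Complex.I := by rw [hk]; push_cast; ring
      rw [e2, e1, Complex.exp_mul_I, Complex.exp_mul_I]
      push_cast
      simp only [Complex.cos_neg, Complex.sin_neg]
      ring
    have hksq : k^2 = ((-(c^2) : ℝ) : ℂ) := by
      rw [hk]
      push_cast
      rw [mul_pow, Complex.I_sq]
      ring
    have lhs_eq : 1/k - 1/k^2 + Complex.exp (-k) / k^2 + (Complex.exp k / k^2 - 1/k - 1/k^2)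
        = (Complex.exp k + Complex.exp (-k) - 2) / k^2 := by ring
    rw [lhs_eq, hsum, hksq]
    have hπξ : Real.pi * ξ ≠ 0 := mul_ne_zero Real.pi_ne_zero hξ
    rw [sinc_of_ne hπξ]
    have hreal : (Real.sin (Real.pi * ξ) / (Real.pi * ξ)) ^ 2
        = (2 * Real.cos c - 2) / (-(c^2)) := by
      have hcos : Real.cos c = 2 * Real.cos (Real.pi * ξ) ^ 2 - 1 := by
        rw [hc]
        have : 2 * Real.pi * ξ = 2 * (Real.pi * ξ) := by ring
        rw [this, Real.cos_two_mul]
      have hpyth := Real.sin_sq_add_cos_sq (Real.pi * ξ)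
      rw [hcos, hc]
      field_simp
      nlinarith [hpyth]
    rw [hreal]
    push_cast
    ring

lemma integrable_fourier_Tri : Integrable (FourierTransform.fourier Tri) := by
  have h : FourierTransform.fourier Tri = fun ξ : ℝ => (((sinc (Real.pi * ξ))^2 : ℝ) : ℂ) :=
    funext fourier_Tri
  rw [h]
  exact (integrable_sinc_sq.comp_mul_left' Real.pi_ne_zero).ofReal

lemma integral_sinc_sq_pi : (∫ ξ : ℝ, sinc (Real.pi * ξ) ^ 2) = 1 := by
  have hinv := integrable_Tri.fourierInv_fourier_eq integrable_fourier_Tri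
    (continuous_Tri.continuousAt (x := 0))
  have h0 : Tri 0 = 1 := by simp [Tri]
  have hL : FourierTransformInv.fourierInv (FourierTransform.fourier Tri) 0
      = ∫ ξ : ℝ, FourierTransform.fourier Tri ξ := by
    rw [Real.fourierInv_eq]
    simp
  have hc : (∫ ξ : ℝ, ((sinc (Real.pi * ξ) ^ 2 : ℝ) : ℂ)) = 1 := by
    simp_rw [← fourier_Tri]
    rw [← hL, hinv, h0]
  have key : (∫ ξ : ℝ, ((sinc (Real.pi * ξ) ^ 2 : ℝ) : ℂ))
      = ((∫ ξ : ℝ, sinc (Real.pi * ξ) ^ 2 : ℝ) : ℂ) := integral_ofReal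
  rw [key] at hc
  exact_mod_cast hc

lemma integral_sinc_sq : (∫ x : ℝ, sinc x ^ 2) = Real.pi := by
  have h := MeasureTheory.Measure.integral_comp_mul_left (fun x : ℝ => sinc x ^ 2) Real.pi
  simp only [integral_sinc_sq_pi] at h
  rw [_root_.abs_of_nonneg (inv_nonneg.mpr Real.pi_pos.le), smul_eq_mul] at h
  field_simp at h
  linarith [h]

lemma key_tendsto (ω₀ ωc : ℝ) (hω₀ : 0 < ω₀) (hc : ω₀ < ωc) :
    Tendsto (fun t : ℝ => ∫ u in (-(t/2*ω₀))..(t/2*ωc + -(t/2*ω₀)), (ω₀ + 2*u/t) * sinc u ^ 2)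
      atTop (nhds (ω₀ * Real.pi)) := by
  set a : ℝ → ℝ := fun t => -(t/2*ω₀) with ha_def
  set b : ℝ → ℝ := fun t => t/2*ωc + -(t/2*ω₀) with hb_def
  set F : ℝ → ℝ → ℝ := fun t u =>
    Set.indicator (Set.Ioc (a t) (b t)) (fun u => (ω₀ + 2*u/t) * sinc u ^ 2) u with hF_def
  have hFapp : ∀ t u : ℝ, F t u
      = Set.indicator (Set.Ioc (a t) (b t)) (fun u => (ω₀ + 2*u/t) * sinc u ^ 2) u :=
    fun t u => rfl
  have ha : Tendsto a atTop atBot := by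
    rw [ha_def]
    refine tendsto_neg_atBot_iff.mpr ?_
    exact (tendsto_id.atTop_div_const two_pos).atTop_mul_const hω₀
  have hb : Tendsto b atTop atTop := by
    have heq : b = fun t => t * ((ωc - ω₀)/2) := by funext t; rw [hb_def]; ring
    rw [heq]
    exact tendsto_id.atTop_mul_const (by linarith)
  have hmain : Tendsto (fun t : ℝ => ∫ u : ℝ, F t u) atTop (nhds (ω₀ * Real.pi)) := by
    have hlimit : (∫ u : ℝ, ω₀ * sinc u ^ 2) = ω₀ * Real.pi := by
      rw [integral_const_mul, integral_sinc_sq]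
    rw [← hlimit]
    refine tendsto_integral_filter_of_dominated_convergence
      (fun u => ωc * sinc u ^ 2) ?_ ?_ (integrable_sinc_sq.const_mul _) ?_
    · refine Eventually.of_forall fun t => ?_
      refine Measurable.aestronglyMeasurable ?_
      exact (((measurable_id.const_mul 2).div_const t).const_add ω₀ |>.mul
        (measurable_sinc.pow_const 2)).indicator measurableSet_Ioc
    · filter_upwards [eventually_gt_atTop (0:ℝ)] with t ht
      refine Eventually.of_forall fun u => ?_
      rw [Real.norm_eq_abs]
      by_cases hu : u ∈ Set.Ioc (a t) (b t)
      · rw [hFapp, Set.indicator_of_mem hu]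
        obtain ⟨h1, h2⟩ := hu
        have hb1 : a t = -(t/2*ω₀) := rfl
        have hb2 : b t = t/2*ωc + -(t/2*ω₀) := rfl
        rw [hb1] at h1; rw [hb2] at h2
        have e0 : 0 ≤ ω₀ + 2*u/t := by
          have h3 : -ω₀ ≤ 2*u/t := by
            rw [le_div_iff₀ ht]
            nlinarith
          linarith
        have e1 : ω₀ + 2*u/t ≤ ωc := by
          have h3 : 2*u/t ≤ ωc - ω₀ := by
            rw [div_le_iff₀ ht]
            nlinarith
          linarith
        rw [_root_.abs_of_nonneg (mul_nonneg e0 (sq_nonneg _))]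
        exact mul_le_mul_of_nonneg_right e1 (sq_nonneg _)
      · rw [hFapp, Set.indicator_of_notMem hu, abs_zero]
        exact mul_nonneg (by linarith) (sq_nonneg _)
    · refine Eventually.of_forall fun u => ?_
      have hev : ∀ᶠ t in atTop, F t u = (ω₀ + 2*u/t) * sinc u ^ 2 := by
        filter_upwards [ha.eventually (eventually_lt_atBot u),
          hb.eventually (eventually_ge_atTop u)] with t h1 h2
        rw [hFapp]
        exact Set.indicator_of_mem (Set.mem_Ioc.mpr ⟨h1, h2⟩) _
      refine Tendsto.congr' (hev.mono fun t h => h.symm) ?_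
      have hcoef : Tendsto (fun t : ℝ => ω₀ + 2*u/t) atTop (nhds ω₀) := by
        have h0 : Tendsto (fun t : ℝ => (2*u)/t) atTop (nhds 0) :=
          tendsto_const_nhds.div_atTop tendsto_id
        simpa using tendsto_const_nhds.add h0
      simpa using hcoef.mul_const (sinc u ^ 2)
  refine Tendsto.congr' ?_ hmain
  filter_upwards [eventually_gt_atTop (0:ℝ)] with t ht
  have hab : a t ≤ b t := by
    have h2 : 0 ≤ t/2*ωc := mul_nonneg (by linarith) (by linarith)
    show -(t/2*ω₀) ≤ t/2*ωc + -(t/2*ω₀)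
    linarith
  have : (fun u : ℝ => F t u) = Set.indicator (Set.Ioc (a t) (b t))
      (fun u => (ω₀ + 2*u/t) * sinc u ^ 2) := funext fun u => hFapp t u
  rw [this, MeasureTheory.integral_indicator measurableSet_Ioc,
    intervalIntegral.integral_of_le hab]

noncomputable def gammaCutoff (α ωc ω ω' t : ℝ) : ℂ :=
  (α : ℂ) * Complex.exp (Complex.I * (ω' - ω) * t / 2) *
    ∫ Ω in (0:ℝ)..ωc, ((Ω : ℝ) : ℂ) *
      ((t : ℂ) * (sinc ((ω' - Ω) * t / 2) : ℝ)) *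
      ((t : ℂ) * (sinc ((ω - Ω) * t / 2) : ℝ))

theorem cutoff_rate_tendsto_markovian (α ωc ω₀ : ℝ)
    (hα : 0 < α) (hω₀ : 0 < ω₀) (hc : ω₀ < ωc) :
    Tendsto (fun t : ℝ => gammaCutoff α ωc ω₀ ω₀ t / (t : ℂ)) atTop
      (nhds ((2 * Real.pi * α * ω₀ : ℝ) : ℂ)) := by
  have hreal : Tendsto (fun t : ℝ =>
      2*α*(∫ u in (-(t/2*ω₀))..(t/2*ωc + -(t/2*ω₀)), (ω₀ + 2*u/t) * sinc u ^ 2))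
      atTop (nhds ((2 * Real.pi * α * ω₀ : ℝ))) := by
    have h := (key_tendsto ω₀ ωc hω₀ hc).const_mul (2*α)
    have he : 2*α*(ω₀ * Real.pi) = 2 * Real.pi * α * ω₀ := by ring
    rwa [he] at h
  have hcomp : Tendsto (fun t : ℝ =>
      (((2*α*(∫ u in (-(t/2*ω₀))..(t/2*ωc + -(t/2*ω₀)), (ω₀ + 2*u/t) * sinc u ^ 2)) : ℝ) : ℂ))
      atTop (nhds ((2 * Real.pi * α * ω₀ : ℝ) : ℂ)) := by
    exact (Complex.continuous_ofReal.tendsto _).comp hreal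
  refine Tendsto.congr' ?_ hcomp
  filter_upwards [eventually_gt_atTop (0:ℝ)] with t ht
  have htne : t ≠ 0 := ne_of_gt ht
  set S : ℝ := ∫ u in (-(t/2*ω₀))..(t/2*ωc + -(t/2*ω₀)), (ω₀ + 2*u/t) * sinc u ^ 2 with hS
  -- complex integral equals cast of real integral
  have hInt : (∫ Ω in (0:ℝ)..ωc, ((Ω : ℝ) : ℂ) *
        ((t : ℂ) * (sinc ((ω₀ - Ω) * t / 2) : ℝ)) *
        ((t : ℂ) * (sinc ((ω₀ - Ω) * t / 2) : ℝ)))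
      = (((∫ Ω in (0:ℝ)..ωc, Ω * (t * sinc ((ω₀ - Ω) * t / 2)) * (t * sinc ((ω₀ - Ω) * t / 2))
          : ℝ)) : ℂ) := by
    rw [← intervalIntegral.integral_ofReal]
    refine intervalIntegral.integral_congr fun Ω _ => ?_
    push_cast
    ring
  -- substitution
  have hsub : (∫ Ω in (0:ℝ)..ωc, Ω * (t * sinc ((ω₀ - Ω) * t / 2)) * (t * sinc ((ω₀ - Ω) * t / 2)))
      = (t/2)⁻¹ * (t^2 * S) := by
    have h1 : (∫ Ω in (0:ℝ)..ωc, Ω * (t * sinc ((ω₀ - Ω) * t / 2)) * (t * sinc ((ω₀ - Ω) * t / 2)))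
        = ∫ Ω in (0:ℝ)..ωc,
            (fun u => (ω₀ + 2*u/t) * (t * sinc u) * (t * sinc u)) (t/2 * Ω + -(t/2*ω₀)) := by
      refine intervalIntegral.integral_congr fun Ω _ => ?_
      simp only
      have e1 : ω₀ + 2*(t/2*Ω + -(t/2*ω₀))/t = Ω := by field_simp; ring
      have e2 : sinc (t/2*Ω + -(t/2*ω₀)) = sinc ((ω₀ - Ω) * t / 2) := by
        rw [show (ω₀ - Ω) * t / 2 = -(t/2*Ω + -(t/2*ω₀)) by ring, sinc_neg]
      rw [e1, e2]
    rw [h1, intervalIntegral.integral_comp_mul_add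
      (fun u => (ω₀ + 2*u/t) * (t * sinc u) * (t * sinc u))
      (ne_of_gt (half_pos ht)) (-(t/2*ω₀))]
    rw [smul_eq_mul]
    congr 1
    have h2 : (∫ u in (t/2*0 + -(t/2*ω₀))..(t/2*ωc + -(t/2*ω₀)),
        (ω₀ + 2*u/t) * (t * sinc u) * (t * sinc u))
        = ∫ u in (-(t/2*ω₀))..(t/2*ωc + -(t/2*ω₀)), t^2 * ((ω₀ + 2*u/t) * sinc u ^ 2) := by
      rw [show t/2*0 + -(t/2*ω₀) = -(t/2*ω₀) by ring]
      refine intervalIntegral.integral_congr fun u _ => ?_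
      ring
    rw [h2, intervalIntegral.integral_const_mul, hS]
  show (((2*α*S : ℝ)) : ℂ) = gammaCutoff α ωc ω₀ ω₀ t / (t : ℂ)
  rw [gammaCutoff]
  have hexp : Complex.exp (Complex.I * ((ω₀ : ℂ) - (ω₀ : ℂ)) * (t : ℂ) / 2) = 1 := by
    simp
  rw [hexp, mul_one, hInt, hsub]
  have htc : (t : ℂ) ≠ 0 := Complex.ofReal_ne_zero.mpr htne
  push_cast
  field_simp
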